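/- For the chained Bell measurements on a maximally entangled two-qubit state, the quantum value of I_N satisfies I_N = 2N sin²(π/(4N)), which is at most π²/(8N); consequently I_N → 0 as N → ∞. -/
import Mathlib


open Real Filter

lemma chained_aux (N : ℕ) (hN : 1 ≤ N) :
    cos ((2 * N - 1) * π / (4 * N)) ^ 2 = sin (π / (4 * N)) ^ 2 := by
  have hNpos : (0:ℝ) < N := by exact_mod_cast hN
  have h : (2 * (N:ℝ) - 1) * π / (4 * N) = π / 2 - π / (4 * N) := by
    field_simp; ring
  rw [h, cos_pi_div_two_sub]

lemma chained_bound (N : ℕ) (hN : 1 ≤ N) :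
    2 * N * sin (π / (4 * N)) ^ 2 ≤ π ^ 2 / (8 * N) := by
  have hNpos : (0:ℝ) < N := by exact_mod_cast hN
  have hx : 0 < π / (4 * N) := by positivity
  have hs : |sin (π / (4 * N))| ≤ |π / (4 * N)| := abs_sin_le_abs
  have hs2 : sin (π / (4 * N)) ^ 2 ≤ (π / (4 * N)) ^ 2 := by
    rw [← sq_abs, ← sq_abs (π / (4 * N))]
    exact pow_le_pow_left₀ (abs_nonneg _) hs 2
  have : 2 * (N:ℝ) * sin (π / (4 * N)) ^ 2 ≤ 2 * N * (π / (4 * N)) ^ 2 := by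
    apply mul_le_mul_of_nonneg_left hs2; positivity
  refine this.trans (le_of_eq ?_)
  field_simp; ring

/-- For the chained Bell measurements on a maximally entangled two-qubit state,
the quantum value of `I_N` equals `2N sin²(π/(4N))`
(the closing term is `cos²((2N−1)π/(4N))` and each of the `2N−1` terms with
`|a−b| = 1` is `sin²(π/(4N))`), which is at most `π²/(8N)`; consequently
`I_N → 0` as `N → ∞`. -/
theorem chained_bell_quantum_value :
    (∀ N : ℕ, 1 ≤ N →
      cos ((2 * N - 1) * π / (4 * N)) ^ 2 + (2 * N - 1) * sin (π / (4 * N)) ^ 2 =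
        2 * N * sin (π / (4 * N)) ^ 2) ∧
    (∀ N : ℕ, 1 ≤ N → 2 * N * sin (π / (4 * N)) ^ 2 ≤ π ^ 2 / (8 * N)) ∧
    Tendsto (fun N : ℕ => 2 * N * sin (π / (4 * N)) ^ 2) atTop (nhds 0) := by
  refine ⟨fun N hN => by rw [chained_aux N hN]; ring, chained_bound, ?_⟩
  have h0 : Tendsto (fun N : ℕ => π ^ 2 / (8 * (N:ℝ))) atTop (nhds 0) := by
    apply Tendsto.div_atTop (tendsto_const_nhds)
    exact Tendsto.const_mul_atTop (by norm_num) tendsto_natCast_atTop_atTop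
  refine squeeze_zero (fun N => by positivity) (fun N => ?_) h0
  rcases Nat.eq_zero_or_pos N with h | h
  · simp [h]
  · exact chained_bound N h
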